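/- For every integer m ≥ 1 and every t ∈ ℤ/nℤ, one has τ_{(n−1)m}^{(t)}(x_1,…,x_m) = ∏_{u=0}^{n−2} e_m^{(t−u)}(x_1,…,x_m); in particular the top-degree τ is the product of the n−1 monomials e_m^{(t)}, e_m^{(t−1)}, …, e_m^{(t−n+2)}. -/

import Mathlib

noncomputable section

open Finset MvPolynomial

open Classical in
/-- Loop elementary symmetric function `e_k^{(s)}(x_1, …, x_m)`; zero for `k < 0` (and
automatically zero for `k > m`).  The variable `x_i^{(s)}` is `X (i-1, s)`. -/
def lE (n m : ℕ) (k : ℤ) (s : ZMod n) : MvPolynomial (Fin m × ZMod n) ℤ :=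
  if 0 ≤ k then
    ∑ f ∈ Finset.univ.filter (fun f : Fin k.toNat → Fin m => StrictMono f),
      ∏ j : Fin k.toNat, MvPolynomial.X (f j, s + ((j : ℕ) : ZMod n))
  else 0

open Classical in
/-- `τ_k^{(s)}(x_a, …, x_b)` (1-indexed window `a ≤ i ≤ b`): the sum over weakly increasing
sequences `a ≤ i_1 ≤ ⋯ ≤ i_k ≤ b` in which no value occurs more than `n - 1` times of
`x_{i_1}^{(s)} x_{i_2}^{(s-1)} ⋯ x_{i_k}^{(s-k+1)}`; zero for `k < 0`. -/
def lT (n m a b : ℕ) (k : ℤ) (s : ZMod n) : MvPolynomial (Fin m × ZMod n) ℤ :=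
  if 0 ≤ k then
    ∑ f ∈ Finset.univ.filter (fun f : Fin k.toNat → Fin m =>
        Monotone f ∧ (∀ j, a ≤ (f j : ℕ) + 1 ∧ (f j : ℕ) + 1 ≤ b) ∧
        ∀ v : Fin m, (Finset.univ.filter (fun j => f j = v)).card ≤ n - 1),
      ∏ j : Fin k.toNat, MvPolynomial.X (f j, s - ((j : ℕ) : ZMod n))
  else 0

/-- the unique top tau sequence: `j ↦ j / (n-1)` -/
def tdiv {n m : ℕ} (j : Fin ((n - 1) * m)) : Fin m :=
  ⟨(j : ℕ) / (n - 1), by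
    have h := j.isLt
    have hpos : 0 < (n - 1) * m := lt_of_le_of_lt (Nat.zero_le _) h
    have hc : 0 < n - 1 := Nat.pos_of_ne_zero (fun h0 => by simp [h0] at hpos)
    exact Nat.div_lt_of_lt_mul h⟩

lemma tdiv_div_helper {c : ℕ} (hc : 0 < c) (i u : ℕ) (hu : u < c) : (i * c + u) / c = i := by
  rw [add_comm, Nat.add_mul_div_right _ _ hc, Nat.div_eq_of_lt hu, zero_add]

lemma tdiv_mod_helper {c : ℕ} (i u : ℕ) (hu : u < c) : (i * c + u) % c = u := by
  rw [add_comm, Nat.add_mul_mod_self_right, Nat.mod_eq_of_lt hu]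

open Classical in
lemma card_tdiv_fiber {n m : ℕ} (hn : 1 < n) (v : Fin m) :
    (Finset.univ.filter (fun j : Fin ((n - 1) * m) => tdiv j = v)).card = n - 1 := by
  have hc : 0 < n - 1 := by omega
  have hkey : (Finset.univ.filter (fun j : Fin ((n - 1) * m) => tdiv j = v)).card
      = (Finset.Ico ((v : ℕ) * (n - 1)) ((v : ℕ) * (n - 1) + (n - 1))).card := by
    refine Finset.card_bij' (fun j _ => (j : ℕ)) (fun x hx => ⟨x, ?_⟩) ?_ ?_ ?_ ?_
    · simp only [Finset.mem_Ico] at hx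
      have hv := v.isLt
      calc (x : ℕ) < ((v : ℕ) + 1) * (n - 1) := by rw [add_mul, one_mul]; omega
        _ ≤ m * (n - 1) := Nat.mul_le_mul_right _ (by omega)
        _ = (n - 1) * m := mul_comm _ _
    · intro j hj
      simp only [Finset.mem_filter, Finset.mem_univ, true_and] at hj
      have hdiv : (j : ℕ) / (n - 1) = (v : ℕ) := congrArg Fin.val hj
      have h1 := Nat.div_add_mod (j : ℕ) (n - 1)
      have h2 := Nat.mod_lt (j : ℕ) hc
      rw [hdiv] at h1
      simp only [Finset.mem_Ico]
      rw [mul_comm ((v : ℕ)) (n - 1)]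
      omega
    · intro x hx
      simp only [Finset.mem_Ico] at hx
      simp only [Finset.mem_filter, Finset.mem_univ, true_and]
      apply Fin.ext
      show (x : ℕ) / (n - 1) = (v : ℕ)
      exact Nat.div_eq_of_lt_le (by omega) (by rw [Nat.succ_mul]; omega)
    · intro j _; exact Fin.ext rfl
    · intro x _; rfl
  rw [hkey, Nat.card_Ico]
  omega

open Classical in
lemma mem_filter_eq_tdiv {n m : ℕ} (hn : 1 < n)
    {f : Fin ((n - 1) * m) → Fin m} (hmono : Monotone f)
    (hcard : ∀ v : Fin m, (Finset.univ.filter (fun j => f j = v)).card ≤ n - 1) :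
    f = tdiv := by
  have hc : 0 < n - 1 := by omega
  have htot : ((Finset.univ : Finset (Fin ((n - 1) * m))).card)
      = ∑ v : Fin m, (Finset.univ.filter (fun j => f j = v)).card :=
    Finset.card_eq_sum_card_fiberwise (fun x _ => Finset.mem_univ (f x))
  have hfib : ∀ v : Fin m, (Finset.univ.filter (fun j => f j = v)).card = n - 1 := by
    have heq : ∑ v : Fin m, (Finset.univ.filter (fun j => f j = v)).card
        = ∑ _v : Fin m, (n - 1) := by
      rw [← htot]
      simp [Finset.card_univ, mul_comm]
    have := (Finset.sum_eq_sum_iff_of_le (fun v _ => hcard v)).mp heq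
    exact fun v => this v (Finset.mem_univ v)
  have hle : ∀ v : Fin m, (Finset.univ.filter (fun j => f j ≤ v)).card
      = ((v : ℕ) + 1) * (n - 1) := by
    intro v
    rw [Finset.card_eq_sum_card_fiberwise (f := f) (t := Finset.Iic v)
        (fun x hx => Finset.mem_Iic.mpr (Finset.mem_filter.mp hx).2)]
    have hinner : ∀ w ∈ Finset.Iic v,
        ((Finset.univ.filter (fun j => f j ≤ v)).filter (fun j => f j = w))
          = Finset.univ.filter (fun j => f j = w) := by
      intro w hw
      ext j
      simp only [Finset.mem_filter, Finset.mem_univ, true_and]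
      constructor
      · rintro ⟨_, h⟩; exact h
      · rintro rfl; exact ⟨Finset.mem_Iic.mp hw, rfl⟩
    rw [Finset.sum_congr rfl (fun w hw => by rw [hinner w hw, hfib w])]
    rw [Finset.sum_const, Fin.card_Iic, smul_eq_mul]
  have hlt : ∀ v : Fin m, (Finset.univ.filter (fun j => f j < v)).card
      = (v : ℕ) * (n - 1) := by
    intro v
    have hsplit : (Finset.univ.filter (fun j => f j ≤ v))
        = (Finset.univ.filter (fun j => f j < v)) ∪ (Finset.univ.filter (fun j => f j = v)) := by
      ext j
      simp only [Finset.mem_union, Finset.mem_filter, Finset.mem_univ, true_and]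
      exact le_iff_lt_or_eq
    have hdisj : Disjoint (Finset.univ.filter (fun j => f j < v))
        (Finset.univ.filter (fun j => f j = v)) := by
      rw [Finset.disjoint_left]
      intro j hj1 hj2
      simp only [Finset.mem_filter, Finset.mem_univ, true_and] at hj1 hj2
      exact absurd hj2 (ne_of_lt hj1)
    have := hle v
    rw [hsplit, Finset.card_union_of_disjoint hdisj, hfib v] at this
    rw [add_mul, one_mul] at this
    omega
  funext j
  apply Fin.ext
  show (f j : ℕ) = (j : ℕ) / (n - 1)
  symm
  have hlow : (f j : ℕ) * (n - 1) ≤ (j : ℕ) := by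
    rw [← hlt (f j)]
    calc (Finset.univ.filter (fun j' => f j' < f j)).card
        ≤ (Finset.Iio j).card := by
          apply Finset.card_le_card
          intro j' hj'
          simp only [Finset.mem_filter, Finset.mem_univ, true_and] at hj'
          simp only [Finset.mem_Iio]
          by_contra h
          exact absurd (hmono (not_lt.mp h)) (not_le.mpr hj')
      _ = (j : ℕ) := Fin.card_Iio j
  have hhigh : (j : ℕ) + 1 ≤ ((f j : ℕ) + 1) * (n - 1) := by
    rw [← hle (f j)]
    calc (j : ℕ) + 1 = (Finset.Iic j).card := (Fin.card_Iic j).symm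
      _ ≤ (Finset.univ.filter (fun j' => f j' ≤ f j)).card := by
          apply Finset.card_le_card
          intro j' hj'
          simp only [Finset.mem_Iic] at hj'
          simp only [Finset.mem_filter, Finset.mem_univ, true_and]
          exact hmono hj'
  exact Nat.div_eq_of_lt_le hlow
    (by rw [Nat.succ_mul]; rw [Nat.add_mul, one_mul] at hhigh; omega)

lemma fin_strictMono_eq_id {m : ℕ} {f : Fin m → Fin m} (hf : StrictMono f) : f = id := by
  have hbij : Function.Bijective f :=
    (Finite.injective_iff_bijective (f := f)).mp hf.injective
  exact (hf.range_inj strictMono_id).mp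
    (by rw [hbij.surjective.range_eq, Set.range_id])

open Classical in
lemma lE_top (n m : ℕ) (s : ZMod n) :
    lE n m (m : ℤ) s = ∏ j : Fin m, X (j, s + ((j : ℕ) : ZMod n)) := by
  rw [lE, if_pos (Int.natCast_nonneg m)]
  simp only [Int.toNat_natCast]
  have hset : (Finset.univ.filter fun f : Fin m → Fin m => StrictMono f)
      = {(id : Fin m → Fin m)} := by
    ext f
    simp only [Finset.mem_filter, Finset.mem_univ, true_and, Finset.mem_singleton]
    exact ⟨fin_strictMono_eq_id, fun h => h ▸ strictMono_id⟩
  rw [hset, Finset.sum_singleton]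
  rfl

theorem tau_top_eq_prod_em_aux (n m : ℕ) (hn : 1 < n) (hm : 1 ≤ m) (t : ZMod n) :
    lT n m 1 m (((n - 1) * m : ℕ) : ℤ) t =
      ∏ u ∈ Finset.range (n - 1), lE n m (m : ℤ) (t - (u : ZMod n)) := by
  have hc : 0 < n - 1 := by omega
  have hneg : ((n - 1 : ℕ) : ZMod n) = -1 := by
    have : ((n - 1 : ℕ) : ZMod n) = (n : ZMod n) - 1 := by
      push_cast [Nat.cast_sub (by omega : 1 ≤ n)]; ring
    rw [this, ZMod.natCast_self, zero_sub]
  rw [lT, if_pos (Int.natCast_nonneg _)]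
  simp only [Int.toNat_natCast]
  have hset : (Finset.univ.filter fun f : Fin ((n - 1) * m) → Fin m =>
      Monotone f ∧ (∀ j, 1 ≤ (f j : ℕ) + 1 ∧ (f j : ℕ) + 1 ≤ m) ∧
        ∀ v : Fin m, (Finset.univ.filter fun j => f j = v).card ≤ n - 1)
      = {(tdiv : Fin ((n - 1) * m) → Fin m)} := by
    ext f
    simp only [Finset.mem_filter, Finset.mem_univ, true_and, Finset.mem_singleton]
    constructor
    · rintro ⟨h1, _, h3⟩
      exact mem_filter_eq_tdiv hn h1 h3
    · rintro rfl
      refine ⟨?_, ?_, ?_⟩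
      · intro j j' hjj'
        simp only [tdiv, Fin.mk_le_mk]
        exact Nat.div_le_div_right (Fin.le_def.mp hjj')
      · intro j
        exact ⟨Nat.succ_le_succ (Nat.zero_le _), (tdiv j).isLt⟩
      · intro v
        rw [card_tdiv_fiber hn v]
  rw [hset, Finset.sum_singleton]
  -- compute RHS
  simp only [lE_top]
  rw [← Fin.prod_univ_eq_prod_range]
  rw [← Fintype.prod_prod_type']
  -- bijection (u, i) ↦ i * (n-1) + u
  have hlt : ∀ p : Fin (n - 1) × Fin m, (p.2 : ℕ) * (n - 1) + (p.1 : ℕ) < (n - 1) * m := by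
    rintro ⟨u, i⟩
    have hu := u.isLt
    have hi := i.isLt
    calc (i : ℕ) * (n - 1) + (u : ℕ) < ((i : ℕ) + 1) * (n - 1) := by
          rw [add_mul, one_mul]; omega
      _ ≤ m * (n - 1) := Nat.mul_le_mul_right _ (by omega)
      _ = (n - 1) * m := mul_comm _ _
  set e : Fin (n - 1) × Fin m → Fin ((n - 1) * m) :=
    fun p => ⟨(p.2 : ℕ) * (n - 1) + (p.1 : ℕ), hlt p⟩ with he
  have hbij : Function.Bijective e := by
    rw [Fintype.bijective_iff_injective_and_card]
    constructor
    · rintro ⟨u1, i1⟩ ⟨u2, i2⟩ h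
      have h' : (i1 : ℕ) * (n - 1) + (u1 : ℕ) = (i2 : ℕ) * (n - 1) + (u2 : ℕ) :=
        congrArg Fin.val h
      have hu : (u1 : ℕ) = (u2 : ℕ) := by
        have := congrArg (· % (n - 1)) h'
        simpa [tdiv_mod_helper _ _ u1.isLt, tdiv_mod_helper _ _ u2.isLt] using this
      have hi : (i1 : ℕ) = (i2 : ℕ) := by
        have := congrArg (· / (n - 1)) h'
        simpa [tdiv_div_helper hc _ _ u1.isLt, tdiv_div_helper hc _ _ u2.isLt] using this
      exact Prod.ext (Fin.ext hu) (Fin.ext hi)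
    · simp
  refine (Fintype.prod_bijective e hbij
      (fun p => X (p.2, t - ((p.1 : ℕ) : ZMod n) + ((p.2 : ℕ) : ZMod n)))
      (fun j => X (tdiv j, t - ((j : ℕ) : ZMod n))) ?_).symm
  rintro ⟨u, i⟩
  have h1 : tdiv (e (u, i)) = i := by
    apply Fin.ext
    show ((i : ℕ) * (n - 1) + (u : ℕ)) / (n - 1) = (i : ℕ)
    exact tdiv_div_helper hc _ _ u.isLt
  have h2 : ((((i : ℕ) * (n - 1) + (u : ℕ)) : ℕ) : ZMod n)
      = ((u : ℕ) : ZMod n) - ((i : ℕ) : ZMod n) := by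
    push_cast
    rw [hneg]
    ring
  show X (i, t - ((u : ℕ) : ZMod n) + ((i : ℕ) : ZMod n))
      = X (tdiv (e (u, i)), t - ((((i : ℕ) * (n - 1) + (u : ℕ) : ℕ)) : ZMod n))
  rw [h1, h2]
  congr 1
  rw [Prod.mk.injEq]
  exact ⟨rfl, by ring⟩

/-- the top-degree `τ` is a monomial:
`τ_{(n−1)m}^{(t)}(x_1,…,x_m) = ∏_{u=0}^{n−2} e_m^{(t−u)}(x_1,…,x_m)`. -/
theorem tau_top_eq_prod_em (n m : ℕ) (hn : 1 < n) (hm : 1 ≤ m) (t : ZMod n) :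
    lT n m 1 m (((n - 1) * m : ℕ) : ℤ) t =
      ∏ u ∈ Finset.range (n - 1), lE n m (m : ℤ) (t - (u : ZMod n)) :=
  tau_top_eq_prod_em_aux n m hn hm t

end
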